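/- Let X be a nonempty compact ultrametric space and let C be any collection of balls of X whose union is X. Then there is a finite subcollection C' ⊆ C whose members are pairwise disjoint and whose union is X; that is, every cover of X by balls contains a finite subcover that is a partition of X. -/

import Mathlib

/-- A ball in a metric space: an open metric ball of positive radius. -/
def IsBall {X : Type*} [MetricSpace X] (B : Set X) : Prop :=
  ∃ (c : X) (r : ℝ), 0 < r ∧ B = Metric.ball c r

/-- In a nonempty compact ultrametric space, every cover of the space by balls
contains a finite subcover that is a partition of the space. -/
theorem cover_by_balls_has_finite_partition_subcover
    {X : Type*} [MetricSpace X] [CompactSpace X] [Nonempty X]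
    (hX : ∀ x y z : X, dist x y ≤ max (dist x z) (dist z y))
    (C : Set (Set X)) (hball : ∀ B ∈ C, IsBall B)
    (hcov : ⋃₀ C = Set.univ) :
    ∃ C' ⊆ C, C'.Finite ∧ C'.Pairwise (fun A A' => Disjoint A A') ∧
      ⋃₀ C' = Set.univ := by
  have key : ∀ (c1 c2 : X) (r1 r2 : ℝ), r1 ≤ r2 → ∀ z, z ∈ Metric.ball c1 r1 →
      z ∈ Metric.ball c2 r2 → Metric.ball c1 r1 ⊆ Metric.ball c2 r2 := by
    intro c1 c2 r1 r2 hr z hz1 hz2 x hx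
    simp only [Metric.mem_ball] at *
    calc dist x c2 ≤ max (dist x c1) (dist c1 c2) := hX _ _ _
      _ < r2 := by
        apply max_lt (lt_of_lt_of_le hx hr)
        calc dist c1 c2 ≤ max (dist c1 z) (dist z c2) := hX _ _ _
          _ < r2 := max_lt (by rw [dist_comm]; exact lt_of_lt_of_le hz1 hr) hz2
  have nest : ∀ A B : Set X, IsBall A → IsBall B → (A ∩ B).Nonempty →
      A ⊆ B ∨ B ⊆ A := by
    rintro A B ⟨c1, r1, hr1, rfl⟩ ⟨c2, r2, hr2, rfl⟩ ⟨z, hz1, hz2⟩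
    rcases le_total r1 r2 with h | h
    · exact Or.inl (key c1 c2 r1 r2 h z hz1 hz2)
    · exact Or.inr (key c2 c1 r2 r1 h z hz2 hz1)
  have hopen : ∀ B : C, IsOpen (B : Set X) := by
    rintro ⟨B, hB⟩; obtain ⟨c, r, hr, rfl⟩ := hball B hB; exact Metric.isOpen_ball
  have hcov' : Set.univ ⊆ ⋃ B : C, (B : Set X) := by
    rw [← hcov]; rintro x ⟨B, hB, hxB⟩; exact Set.mem_iUnion.2 ⟨⟨B, hB⟩, hxB⟩
  obtain ⟨t, ht⟩ := isCompact_univ.elim_finite_subcover _ hopen hcov'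
  set F : Set (Set X) := ((↑) : C → Set X) '' ↑t with hF
  have hFfin : F.Finite := t.finite_toSet.image _
  have hFC : F ⊆ C := by rintro _ ⟨⟨B, hB⟩, _, rfl⟩; exact hB
  have hFcov : ∀ x : X, ∃ B ∈ F, x ∈ B := by
    intro x
    have := ht (Set.mem_univ x)
    simp only [Set.mem_iUnion] at this
    obtain ⟨B, hBt, hxB⟩ := this
    exact ⟨B, ⟨B, hBt, rfl⟩, hxB⟩
  set C' : Set (Set X) := {A ∈ F | ∀ A' ∈ F, A ⊆ A' → A = A'} with hC'
  refine ⟨C', fun A hA => hFC hA.1, hFfin.subset (fun A hA => hA.1), ?_, ?_⟩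
  · intro A hA B hB hAB
    by_contra hnd
    rw [Set.not_disjoint_iff_nonempty_inter] at hnd
    rcases nest A B (hball A (hFC hA.1)) (hball B (hFC hB.1)) hnd with h | h
    · exact hAB (hA.2 B hB.1 h)
    · exact hAB ((hB.2 A hA.1 h).symm)
  · apply Set.eq_univ_of_forall
    intro x
    obtain ⟨B, hBF, hxB⟩ := hFcov x
    obtain ⟨M, hM, hmax⟩ := Set.Finite.exists_maximalFor id {A ∈ F | B ⊆ A}
      (hFfin.subset (fun A hA => hA.1)) ⟨B, hBF, subset_rfl⟩
    exact ⟨M, ⟨hM.1, fun A' hA' hMA' => subset_antisymm hMA' (hmax ⟨hA', hM.2.trans hMA'⟩ hMA')⟩, hM.2 hxB⟩
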